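/- Let A, B, C be categories with dualities, F : A → B and G : B → C functors, and Ψ_F : F → D_{A,B}F and Ψ_G : G → D_{B,C}G symmetric natural transformations. Then the composite G∘F → D_{B,C}G ∘ D_{A,B}F → D_{A,C}(G∘F) (where the last arrow arises from Φ_B⁻¹ : D_B² → id applied inside D_C ∘ G ∘ D_B² ∘ F ∘ D_A) is a symmetric natural transformation for the duality D_{A,C} on Fun(A, C). -/
import Mathlib


open CategoryTheory

/-- A (bare-hands) duality on a category: a contravariant endofunctor together with
a natural isomorphism `Φ : id → D²` satisfying the coherence relation. -/
structure Duality (A : Type*) [Category A] where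
  obj : A → A
  map : ∀ {X Y : A}, (X ⟶ Y) → (obj Y ⟶ obj X)
  map_id : ∀ X : A, map (𝟙 X) = 𝟙 (obj X)
  map_comp : ∀ {X Y Z : A} (f : X ⟶ Y) (g : Y ⟶ Z), map (f ≫ g) = map g ≫ map f
  Φ : ∀ X : A, X ⟶ obj (obj X)
  Φ_natural : ∀ {X Y : A} (f : X ⟶ Y), f ≫ Φ Y = Φ X ≫ map (map f)
  Φ_iso : ∀ X : A, IsIso (Φ X)
  coherence : ∀ X : A, Φ (obj X) ≫ map (Φ X) = 𝟙 (obj X)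

variable {A B C : Type*} [Category A] [Category B] [Category C]

/-- `Ψ` is a natural transformation `F ⟶ D_{A,B} F = D_B ∘ F ∘ D_A`
(objectwise `Ψ X : F X ⟶ D_B(F(D_A X))`). -/
def IsNatToDual (dA : Duality A) (dB : Duality B) (F : A ⥤ B)
    (Ψ : ∀ X : A, F.obj X ⟶ dB.obj (F.obj (dA.obj X))) : Prop :=
  ∀ {X Y : A} (f : X ⟶ Y), F.map f ≫ Ψ Y = Ψ X ≫ dB.map (F.map (dA.map f))

/-- `Ψ : F ⟶ D_{A,B}F` is symmetric: `D_{A,B}Ψ ∘ Φ_{A,B}(F) = Ψ`, which objectwise reads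
`F(Φ_A X) ≫ Φ_B(F D_A² X) ≫ D_B(Ψ_{D_A X}) = Ψ X`. -/
def IsSymmetric (dA : Duality A) (dB : Duality B) (F : A ⥤ B)
    (Ψ : ∀ X : A, F.obj X ⟶ dB.obj (F.obj (dA.obj X))) : Prop :=
  ∀ X : A,
    F.map (dA.Φ X) ≫ dB.Φ (F.obj (dA.obj (dA.obj X))) ≫ dB.map (Ψ (dA.obj X)) = Ψ X

/-- The composite of two symmetric natural transformations:
`G∘F → D_{B,C}G ∘ D_{A,B}F → D_{A,C}(G∘F)`, where the last arrow arises from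
`Φ_B : id → D_B²` (applied inside `D_C ∘ G ∘ D_B² ∘ F ∘ D_A`). -/
def compSym (dA : Duality A) (dB : Duality B) (dC : Duality C) (F : A ⥤ B) (G : B ⥤ C)
    (ΨF : ∀ X : A, F.obj X ⟶ dB.obj (F.obj (dA.obj X)))
    (ΨG : ∀ Y : B, G.obj Y ⟶ dC.obj (G.obj (dB.obj Y))) :
    ∀ X : A, G.obj (F.obj X) ⟶ dC.obj (G.obj (F.obj (dA.obj X))) :=
  fun X =>
    G.map (ΨF X) ≫ ΨG (dB.obj (F.obj (dA.obj X))) ≫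
      dC.map (G.map (dB.Φ (F.obj (dA.obj X))))

/-- the composite of symmetric natural transformations is a symmetric
natural transformation for the duality `D_{A,C}` on `Fun(A, C)`. -/
theorem compSym_is_symmetric (dA : Duality A) (dB : Duality B) (dC : Duality C)
    (F : A ⥤ B) (G : B ⥤ C)
    (ΨF : ∀ X : A, F.obj X ⟶ dB.obj (F.obj (dA.obj X)))
    (ΨG : ∀ Y : B, G.obj Y ⟶ dC.obj (G.obj (dB.obj Y)))
    (hFnat : IsNatToDual dA dB F ΨF) (hFsym : IsSymmetric dA dB F ΨF)
    (hGnat : IsNatToDual dB dC G ΨG) (hGsym : IsSymmetric dB dC G ΨG) :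
    IsNatToDual dA dC (F ⋙ G) (compSym dA dB dC F G ΨF ΨG) ∧
      IsSymmetric dA dC (F ⋙ G) (compSym dA dB dC F G ΨF ΨG) := by
  constructor
  · intro X Y f
    simp only [Functor.comp_obj, Functor.comp_map, compSym]
    calc G.map (F.map f) ≫ G.map (ΨF Y) ≫ ΨG (dB.obj (F.obj (dA.obj Y))) ≫
          dC.map (G.map (dB.Φ (F.obj (dA.obj Y))))
        = G.map (F.map f ≫ ΨF Y) ≫ ΨG (dB.obj (F.obj (dA.obj Y))) ≫
          dC.map (G.map (dB.Φ (F.obj (dA.obj Y)))) := by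
          rw [G.map_comp, Category.assoc]
      _ = G.map (ΨF X) ≫ (G.map (dB.map (F.map (dA.map f))) ≫
          ΨG (dB.obj (F.obj (dA.obj Y)))) ≫
          dC.map (G.map (dB.Φ (F.obj (dA.obj Y)))) := by
          rw [hFnat f, G.map_comp]; simp only [Category.assoc]
      _ = G.map (ΨF X) ≫ ΨG (dB.obj (F.obj (dA.obj X))) ≫
          dC.map (G.map (dB.map (dB.map (F.map (dA.map f))))) ≫
          dC.map (G.map (dB.Φ (F.obj (dA.obj Y)))) := by
          rw [hGnat (dB.map (F.map (dA.map f))), Category.assoc]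
      _ = G.map (ΨF X) ≫ ΨG (dB.obj (F.obj (dA.obj X))) ≫
          dC.map (G.map (dB.Φ (F.obj (dA.obj Y)) ≫ dB.map (dB.map (F.map (dA.map f))))) := by
          rw [G.map_comp, dC.map_comp]
      _ = G.map (ΨF X) ≫ ΨG (dB.obj (F.obj (dA.obj X))) ≫
          dC.map (G.map (F.map (dA.map f) ≫ dB.Φ (F.obj (dA.obj X)))) := by
          rw [← dB.Φ_natural (F.map (dA.map f))]
      _ = (G.map (ΨF X) ≫ ΨG (dB.obj (F.obj (dA.obj X))) ≫
          dC.map (G.map (dB.Φ (F.obj (dA.obj X))))) ≫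
          dC.map (G.map (F.map (dA.map f))) := by
          rw [G.map_comp, dC.map_comp]; simp only [Category.assoc]
  · intro X
    simp only [Functor.comp_obj, Functor.comp_map, compSym]
    have key : ΨF (dA.obj X) ≫ dB.map (F.map (dA.Φ X))
        = dB.Φ (F.obj (dA.obj X)) ≫ dB.map (ΨF X) := by
      conv_rhs => rw [← hFsym X]
      rw [dB.map_comp, dB.map_comp, ← Category.assoc, ← Category.assoc,
        ← dB.Φ_natural (ΨF (dA.obj X))]
      rw [Category.assoc, Category.assoc]
      rw [← Category.assoc (dB.Φ _), dB.coherence, Category.id_comp]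
    calc G.map (F.map (dA.Φ X)) ≫ dC.Φ (G.obj (F.obj (dA.obj (dA.obj X)))) ≫
          dC.map (G.map (ΨF (dA.obj X)) ≫ ΨG (dB.obj (F.obj (dA.obj (dA.obj X)))) ≫
            dC.map (G.map (dB.Φ (F.obj (dA.obj (dA.obj X))))))
        = G.map (F.map (dA.Φ X)) ≫ (dC.Φ (G.obj (F.obj (dA.obj (dA.obj X)))) ≫
            dC.map (dC.map (G.map (dB.Φ (F.obj (dA.obj (dA.obj X))))))) ≫
          dC.map (ΨG (dB.obj (F.obj (dA.obj (dA.obj X))))) ≫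
          dC.map (G.map (ΨF (dA.obj X))) := by
          simp only [dC.map_comp, Category.assoc]
      _ = G.map (F.map (dA.Φ X)) ≫ (G.map (dB.Φ (F.obj (dA.obj (dA.obj X)))) ≫
            dC.Φ (G.obj (dB.obj (dB.obj (F.obj (dA.obj (dA.obj X)))))) ≫
            dC.map (ΨG (dB.obj (F.obj (dA.obj (dA.obj X)))))) ≫
          dC.map (G.map (ΨF (dA.obj X))) := by
          rw [← dC.Φ_natural (G.map (dB.Φ (F.obj (dA.obj (dA.obj X))))) ]
          simp only [Category.assoc]
      _ = (G.map (F.map (dA.Φ X)) ≫ ΨG (F.obj (dA.obj (dA.obj X)))) ≫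
          dC.map (G.map (ΨF (dA.obj X))) := by
          rw [hGsym (F.obj (dA.obj (dA.obj X)))]; simp only [Category.assoc]
      _ = ΨG (F.obj X) ≫ dC.map (G.map (dB.map (F.map (dA.Φ X)))) ≫
          dC.map (G.map (ΨF (dA.obj X))) := by
          rw [hGnat (F.map (dA.Φ X))]; simp only [Category.assoc]
      _ = ΨG (F.obj X) ≫ dC.map (G.map (ΨF (dA.obj X) ≫ dB.map (F.map (dA.Φ X)))) := by
          rw [G.map_comp, dC.map_comp]
      _ = ΨG (F.obj X) ≫ dC.map (G.map (dB.Φ (F.obj (dA.obj X)) ≫ dB.map (ΨF X))) := by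
          rw [key]
      _ = (G.map (ΨF X) ≫ ΨG (dB.obj (F.obj (dA.obj X)))) ≫
          dC.map (G.map (dB.Φ (F.obj (dA.obj X)))) := by
          rw [hGnat (ΨF X)]
          rw [G.map_comp, dC.map_comp]
          simp only [Category.assoc]
      _ = G.map (ΨF X) ≫ ΨG (dB.obj (F.obj (dA.obj X))) ≫
          dC.map (G.map (dB.Φ (F.obj (dA.obj X)))) := by
          simp only [Category.assoc]
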